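/- Let G be a finite connected graph, e = uv an edge of G such that G − e is connected, and Y a general position set of G − e. Then the set Y_u = {w ∈ Y : d_{G−e}(u,w) ≤ d_{G−e}(v,w)} is a general position set of G. -/

import Mathlib

open SimpleGraph

/-- `S` is a *general position set* of `G`: no three distinct vertices of `S`
lie on a common shortest path (geodesic) of `G`. -/
def IsGPSet {V : Type*} (G : SimpleGraph V) (S : Set V) : Prop :=
  ∀ ⦃u v w : V⦄, u ∈ S → v ∈ S → w ∈ S → u ≠ v → u ≠ w → v ≠ w →
    ∀ p : G.Walk u v, p.IsPath → p.length = G.dist u v → w ∉ p.support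

/-- The *general position number* of `G`: the maximum cardinality of a
general position set. -/
noncomputable def gpNum {V : Type*} [Fintype V] (G : SimpleGraph V) : ℕ :=
  sSup {n : ℕ | ∃ S : Finset V, IsGPSet G ↑S ∧ S.card = n}

/-- The vertex-deleted subgraph `G - x`, induced on `V(G) \ {x}`. -/
def delVert {V : Type*} (G : SimpleGraph V) (x : V) : SimpleGraph {y : V // y ≠ x} :=
  G.comap Subtype.val

/-- Distance can only grow when deleting edges (assuming the smaller graph is
connected). -/
lemma dist_le_dist_deleteEdges {V : Type*} (G : SimpleGraph V) (s : Set (Sym2 V))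
    (hconn : (G.deleteEdges s).Connected) (a b : V) :
    G.dist a b ≤ (G.deleteEdges s).dist a b := by
  obtain ⟨p, hp⟩ := hconn.exists_walk_length_eq_dist a b
  calc G.dist a b ≤ (p.map (Hom.ofLE (G.deleteEdges_le s))).length :=
        SimpleGraph.dist_le _
    _ = p.length := Walk.length_map _ _
    _ = (G.deleteEdges s).dist a b := hp

/-- Key lemma: a geodesic of `G` between `a` and `b` that passes through `u`
and afterwards through `v`, where `uv` is an edge whose deletion keeps the
graph connected, forces `d_{G-e}(v,b) < d_{G-e}(u,b)`. We state it as
deriving `False` from `d_{G-e}(u,b) ≤ d_{G-e}(v,b)`. -/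
lemma key_lemma {V : Type*} [DecidableEq V] (G : SimpleGraph V)
    (hG : G.Connected) {u v a b : V} (huv : G.Adj u v)
    (hconn : (G.deleteEdges {s(u, v)}).Connected)
    (q : G.Walk a u) (r : G.Walk u b)
    (hp : (q.append r).IsPath)
    (hlen : (q.append r).length = G.dist a b)
    (hv : v ∈ r.support)
    (hbu : (G.deleteEdges {s(u, v)}).dist u b ≤ (G.deleteEdges {s(u, v)}).dist v b) :
    False := by
  set H := G.deleteEdges {s(u, v)} with hH
  have hq : q.IsPath := hp.of_append_left
  have hr : r.IsPath := hp.of_append_right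
  have hlen' : q.length + r.length = G.dist a b := by
    rw [← Walk.length_append]; exact hlen
  have hdau : G.dist a u ≤ q.length := SimpleGraph.dist_le q
  have hdub : G.dist u b ≤ r.length := SimpleGraph.dist_le r
  have htri : G.dist a b ≤ G.dist a u + G.dist u b := hG.dist_triangle
  have hqd : q.length = G.dist a u := by omega
  have hrd : r.length = G.dist u b := by omega
  -- split `r` at `v`
  set r1 := r.takeUntil v hv with hr1def
  set r2 := r.dropUntil v hv with hr2def
  have hspec : r1.append r2 = r := r.take_spec hv
  have hrlen : r1.length + r2.length = r.length := by
    rw [← Walk.length_append, hspec]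
  have hduv : G.dist u v ≤ r1.length := SimpleGraph.dist_le r1
  have hdvb : G.dist v b ≤ r2.length := SimpleGraph.dist_le r2
  have htri2 : G.dist u b ≤ G.dist u v + G.dist v b := hG.dist_triangle
  have hr1d : r1.length = G.dist u v := by omega
  have hr2d : r2.length = G.dist v b := by omega
  have hone : G.dist u v = 1 := dist_eq_one_iff_adj.mpr huv
  -- `v ∉ q.support`
  have hnodup : ((q.append r).support).Nodup := hp.support_nodup
  rw [Walk.support_append, List.nodup_append] at hnodup
  have hvtail : v ∈ r.support.tail := by
    have h := hv
    rw [r.support_eq_cons, List.mem_cons] at h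
    exact h.resolve_left huv.ne'
  have hvq : v ∉ q.support := fun h => hnodup.2.2 v h v hvtail rfl
  -- `u ∉ r2.support`
  have hrnodup : r.support.Nodup := hr.support_nodup
  rw [← hspec, Walk.support_append, List.nodup_append] at hrnodup
  have hur2 : u ∉ r2.support := by
    intro h
    have : u ∈ r2.support.tail := by
      rw [r2.support_eq_cons, List.mem_cons] at h
      exact h.resolve_left huv.ne
    exact hrnodup.2.2 u r1.start_mem_support u this rfl
  -- edges avoidance
  have hqe : s(u, v) ∉ q.edges := fun h => hvq (q.snd_mem_support_of_mem_edges h)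
  have hr2e : s(u, v) ∉ r2.edges := fun h => hur2 (r2.fst_mem_support_of_mem_edges h)
  -- H-distances
  have h1 : H.dist a u ≤ G.dist a u := by
    calc H.dist a u ≤ (q.toDeleteEdge s(u,v) hqe).length := SimpleGraph.dist_le _
      _ = q.length := Walk.length_transfer _ _
      _ = G.dist a u := hqd
  have h2 : H.dist v b ≤ G.dist v b := by
    calc H.dist v b ≤ (r2.toDeleteEdge s(u,v) hr2e).length := SimpleGraph.dist_le _
      _ = r2.length := Walk.length_transfer _ _
      _ = G.dist v b := hr2d
  have h3 : G.dist a b ≤ H.dist a b := dist_le_dist_deleteEdges G _ hconn a b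
  have h4 : H.dist a b ≤ H.dist a u + H.dist u b := hconn.dist_triangle
  omega

/-- If `e = uv` is an edge of a finite connected graph `G` such
that `G - e` is connected, and `Y` is a general position set of `G - e`, then
`Y_u = {w ∈ Y : d_{G-e}(u,w) ≤ d_{G-e}(v,w)}` is a general position set of `G`. -/
theorem stmt_14 {V : Type*} [Fintype V] [DecidableEq V] (G : SimpleGraph V)
    (hG : G.Connected) (u v : V) (huv : G.Adj u v)
    (hconn : (G.deleteEdges {s(u, v)}).Connected)
    (Y : Set V) (hY : IsGPSet (G.deleteEdges {s(u, v)}) Y) :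
    IsGPSet G {w ∈ Y | (G.deleteEdges {s(u, v)}).dist u w ≤
      (G.deleteEdges {s(u, v)}).dist v w} := by
  intro a b c ha hb hc hab hac hbc p hp hlen
  set H := G.deleteEdges {s(u, v)} with hH
  -- the geodesic avoids the edge uv
  have hne : s(u, v) ∉ p.edges := by
    intro he
    have hu : u ∈ p.support := p.fst_mem_support_of_mem_edges he
    have hv' : v ∈ p.support := p.snd_mem_support_of_mem_edges he
    have hspec := p.take_spec hu
    have hvsplit : v ∈ (p.takeUntil u hu).support ∨ v ∈ (p.dropUntil u hu).support := by
      have : v ∈ ((p.takeUntil u hu).append (p.dropUntil u hu)).support := by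
        rw [hspec]; exact hv'
      exact (Walk.mem_support_append_iff _ _).mp this
    rcases hvsplit with h | h
    · -- v appears before u: use the symmetric version with the reversed walk
      refine key_lemma G hG (u := u) (v := v) (a := b) (b := a) huv hconn
        (p.dropUntil u hu).reverse (p.takeUntil u hu).reverse ?_ ?_ ?_ ha.2
      · have : ((p.dropUntil u hu).reverse.append (p.takeUntil u hu).reverse)
            = p.reverse := by rw [← Walk.reverse_append, hspec]
        rw [this]; exact hp.reverse
      · have : ((p.dropUntil u hu).reverse.append (p.takeUntil u hu).reverse)
            = p.reverse := by rw [← Walk.reverse_append, hspec]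
        rw [this, Walk.length_reverse, SimpleGraph.dist_comm]; exact hlen
      · rw [Walk.support_reverse]; simpa using h
    · refine key_lemma G hG huv hconn (p.takeUntil u hu) (p.dropUntil u hu) ?_ ?_ h hb.2
      · rw [hspec]; exact hp
      · rw [hspec]; exact hlen
  -- transfer the geodesic to H
  have hHd : H.dist a b ≤ (p.toDeleteEdge s(u,v) hne).length := SimpleGraph.dist_le _
  have hlenH : (p.toDeleteEdge s(u,v) hne).length = H.dist a b := by
    have h1 : (p.toDeleteEdge s(u,v) hne).length = p.length := Walk.length_transfer _ _
    have h2 : G.dist a b ≤ H.dist a b := dist_le_dist_deleteEdges G _ hconn a b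
    omega
  have := hY ha.1 hb.1 hc.1 hab hac hbc (p.toDeleteEdge s(u,v) hne)
    (Walk.IsPath.toDeleteEdges _ _ hp _) hlenH
  rwa [Walk.support_transfer] at this
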